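/- A subset A of a group G is n-thin if and only if for every free ultrafilter p on G, the set Δ_p(A) = {g ∈ G : A ∈ g·p} has at most n elements. -/

import Mathlib

open Pointwise

def companion {G : Type*} [Group G] (p : Ultrafilter G) (A : Set G) : Set G :=
  {g : G | (g⁻¹ • A : Set G) ∈ p}

def NThin {G : Type*} [Group G] (A : Set G) (n : ℕ) : Prop :=
  ∀ g : Fin (n + 1) → G, Function.Injective g → (⋂ i, ((g i) • A : Set G)).Finite

/-- `A` is `n`-thin iff `Δ_p(A)` has at most `n` elements for every free ultrafilter `p`. -/
theorem nthin_iff_companion_card {G : Type*} [Group G] [Infinite G] (A : Set G) (n : ℕ) :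
    NThin A n ↔
      ∀ p : Ultrafilter G, (∀ S ∈ p, (S : Set G).Infinite) →
        ∀ F : Finset G, (F : Set G) ⊆ companion p A → F.card ≤ n := by
  constructor
  · intro hthin p hfree F hF
    by_contra hlt
    push_neg at hlt
    have hcard : n + 1 ≤ F.card := hlt
    obtain ⟨F', hF'sub, hF'card⟩ := Finset.exists_subset_card_eq hcard
    have : Fintype.card (Fin (n+1)) ≤ Fintype.card F' := by simp [hF'card]
    obtain ⟨f⟩ := Function.Embedding.nonempty_of_card_le this
    set g : Fin (n+1) → G := fun i => ((f i : G))⁻¹ with hg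
    have hginj : Function.Injective g := fun i j hij => by
      apply f.injective
      exact Subtype.ext (inv_injective hij)
    have hfin : (⋂ i, (g i • A : Set G)).Finite := hthin g hginj
    have hmem : (⋂ i, (g i • A : Set G)) ∈ p := by
      apply Filter.iInter_mem.2
      intro i
      have : (f i : G) ∈ companion p A := hF (hF'sub (f i).2)
      simpa [hg, companion] using this
    exact (hfree _ hmem) hfin
  · intro h g hginj
    by_contra hinf
    have hinf : (⋂ i, (g i • A : Set G)).Infinite := hinf
    set S := ⋂ i, (g i • A : Set G)
    have hne : (Filter.cofinite ⊓ Filter.principal S).NeBot :=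
      hinf.cofinite_inf_principal_neBot
    set p := Ultrafilter.of (Filter.cofinite ⊓ Filter.principal S)
    have hle := Ultrafilter.of_le (Filter.cofinite ⊓ Filter.principal S)
    have hcof : (p : Filter G) ≤ Filter.cofinite := hle.trans inf_le_left
    have hfree : ∀ T ∈ p, (T : Set G).Infinite := by
      intro T hT
      by_contra hTfin
      rw [Set.not_infinite] at hTfin
      have : Tᶜ ∈ p := hcof hTfin.compl_mem_cofinite
      exact absurd (p.toFilter.inter_mem hT this) (by simp)
    have hS : S ∈ p := (hle.trans inf_le_right) (Filter.mem_principal_self S)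
    classical
    set F : Finset G := Finset.image (fun i => (g i)⁻¹) Finset.univ with hFdef
    have hFcard : F.card = n + 1 := by
      rw [hFdef, Finset.card_image_of_injective _ (fun i j hij => hginj (inv_injective hij))]
      simp
    have hsub : (F : Set G) ⊆ companion p A := by
      intro x hx
      simp only [hFdef, Finset.coe_image, Set.mem_image] at hx
      obtain ⟨i, _, rfl⟩ := hx
      show ((g i)⁻¹)⁻¹ • A ∈ p
      rw [inv_inv]
      exact p.toFilter.mem_of_superset hS (Set.iInter_subset _ i)
    have := h p hfree F hsub
    omega
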